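/- For all integers a and n, P(n) = ρ(a)·P(n-a) + σ(a)·P(n-2a) + P(n-3a), where ρ(a) = 3·P(a-2) - P(a-4) and σ(a) = -ρ(-a) = -(3·P(-a-2) - P(-a-4)). -/

import Mathlib

private lemma hrecE (P : ℤ → ℤ) (hrec : ∀ n : ℤ, P (n + 3) = P (n + 1) + P n)
    (m m1 m3 : ℤ) (e1 : m1 = m + 1) (e3 : m3 = m + 3) : P m3 = P m1 + P m := by
  subst e1; subst e3; exact hrec m

private def ClP (P : ℤ → ℤ) (k m : ℤ) : Prop :=
  P (m + k) = P m * (P k - P (k-1)) + P (m+1) * (P k - P (k-2))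
    + P (m+2) * (P (k-1) + P (k-2) - P k)

private lemma clshift (P : ℤ → ℤ) (k m m' : ℤ) (h : m = m') (hc : ClP P k m') :
    ClP P k m := by rw [h]; exact hc

private lemma clstep3 (P : ℤ → ℤ) (hrec : ∀ n : ℤ, P (n + 3) = P (n + 1) + P n) (k m : ℤ)
    (H0 : ClP P k m) (H1 : ClP P k (m+1)) : ClP P k (m+3) := by
  unfold ClP at H0 H1 ⊢
  rw [hrecE P hrec (m+k) (m+1+k) (m+3+k) (by ring) (by ring),
      hrecE P hrec m (m+1) (m+3) (by ring) (by ring),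
      hrecE P hrec (m+1) (m+1+1) (m+3+1) (by ring) (by ring),
      hrecE P hrec (m+2) (m+1+2) (m+3+2) (by ring) (by ring)]
  linear_combination H0 + H1

private lemma clstepB (P : ℤ → ℤ) (hrec : ∀ n : ℤ, P (n + 3) = P (n + 1) + P n) (k m : ℤ)
    (H1 : ClP P k (m+1)) (H3 : ClP P k (m+3)) : ClP P k m := by
  unfold ClP at H1 H3 ⊢
  rw [hrecE P hrec (m+k) (m+1+k) (m+3+k) (by ring) (by ring),
      hrecE P hrec m (m+1) (m+3) (by ring) (by ring),
      hrecE P hrec (m+1) (m+1+1) (m+3+1) (by ring) (by ring),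
      hrecE P hrec (m+2) (m+1+2) (m+3+2) (by ring) (by ring)] at H3
  linear_combination H3 - H1

private lemma addlaw (P : ℤ → ℤ) (h0 : P 0 = 1) (h1 : P 1 = 1) (h2 : P 2 = 1)
    (hrec : ∀ n : ℤ, P (n + 3) = P (n + 1) + P n) (k : ℤ) : ∀ m : ℤ, ClP P k m := by
  have base0 : ClP P k 0 := by
    show P (0 + k) = _
    rw [show (0:ℤ)+k = k by ring, show (0:ℤ)+1 = 1 by norm_num,
        show (0:ℤ)+2 = 2 by norm_num, h0, h1, h2]
    ring
  have base1 : ClP P k 1 := by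
    show P (1 + k) = _
    rw [show (1:ℤ)+1 = 2 by norm_num, show (1:ℤ)+2 = 3 by norm_num,
        hrecE P hrec 0 1 3 (by norm_num) (by norm_num),
        hrecE P hrec (k-2) (k-1) (1+k) (by ring) (by ring), h0, h1, h2]
    ring
  have base2 : ClP P k 2 := by
    show P (2 + k) = _
    rw [show (2:ℤ)+1 = 3 by norm_num, show (2:ℤ)+2 = 4 by norm_num,
        hrecE P hrec 1 2 4 (by norm_num) (by norm_num),
        hrecE P hrec 0 1 3 (by norm_num) (by norm_num),
        hrecE P hrec (k-1) k (2+k) (by ring) (by ring), h0, h1, h2]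
    ring
  have main : ∀ m : ℤ, ClP P k m ∧ ClP P k (m+1) ∧ ClP P k (m+2) := by
    intro m
    induction m using Int.induction_on with
    | zero => exact ⟨base0, clshift P k _ _ (by norm_num) base1, clshift P k _ _ (by norm_num) base2⟩
    | succ i ih => exact ⟨ih.2.1, clshift P k _ _ (by ring) ih.2.2,
        clshift P k _ _ (by ring) (clstep3 P hrec k (i:ℤ) ih.1 ih.2.1)⟩
    | pred i ih => exact ⟨clstepB P hrec k (-(i:ℤ)-1)
          (clshift P k _ _ (by ring) ih.1) (clshift P k _ _ (by ring) ih.2.2),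
        clshift P k _ _ (by ring) ih.1, clshift P k _ _ (by ring) ih.2.1⟩
  exact fun m => (main m).1

private lemma addlawE (P : ℤ → ℤ) (h0 : P 0 = 1) (h1 : P 1 = 1) (h2 : P 2 = 1)
    (hrec : ∀ n : ℤ, P (n + 3) = P (n + 1) + P n) (k m m1 m2 k1 k2 l : ℤ)
    (e1 : m1 = m + 1) (e2 : m2 = m + 2) (ek1 : k1 = k - 1) (ek2 : k2 = k - 2)
    (el : l = m + k) :
    P l = P m * (P k - P k1) + P m1 * (P k - P k2) + P m2 * (P k1 + P k2 - P k) := by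
  subst e1; subst e2; subst ek1; subst ek2; subst el
  exact addlaw P h0 h1 h2 hrec k m

private lemma pdet (P : ℤ → ℤ) (h0 : P 0 = 1) (h1 : P 1 = 1) (h2 : P 2 = 1)
    (hrec : ∀ n : ℤ, P (n + 3) = P (n + 1) + P n) : ∀ b : ℤ,
    (P b)^3 - (P b)^2 * P (b-2) - P b * (P (b-1))^2 - 3 * P b * P (b-1) * P (b-2)
      + (P (b-1))^3 + (P (b-1))^2 * P (b-2) + 2 * P (b-1) * (P (b-2))^2 + (P (b-2))^3 = 1 := by
  intro b
  induction b using Int.induction_on with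
  | zero =>
    have e2' : P 2 = P 0 + P (0-1) := hrecE P hrec (0-1) 0 2 (by ring) (by ring)
    have e1' : P 1 = P (0-1) + P (0-2) := hrecE P hrec (0-2) (0-1) 1 (by ring) (by ring)
    have v1 : P (0-1) = 0 := by linear_combination h2 - h0 - e2'
    have v2 : P (0-2) = 1 := by linear_combination h1 - v1 - e1'
    rw [h0, v1, v2]; norm_num
  | succ i ih =>
    have b1 : P ((i:ℤ)+1-1) = P (i:ℤ) := congrArg P (by ring)
    have b2 : P ((i:ℤ)+1-2) = P ((i:ℤ)-1) := congrArg P (by ring)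
    have rec1 : P ((i:ℤ)+1) = P ((i:ℤ)-1) + P ((i:ℤ)-2) :=
      hrecE P hrec ((i:ℤ)-2) ((i:ℤ)-1) ((i:ℤ)+1) (by ring) (by ring)
    rw [b1, b2, rec1]
    linear_combination ih
  | pred i ih =>
    have b1 : P (-(i:ℤ)-1-1) = P (-(i:ℤ)-2) := congrArg P (by ring)
    have b2 : P (-(i:ℤ)-1-2) = P (-(i:ℤ)-3) := congrArg P (by ring)
    have b3 : P (-(i:ℤ)-1) = P (-(i:ℤ)-1) := rfl
    have b4 : P (-(i:ℤ)-2) = P (-(i:ℤ)-1-1) := congrArg P (by ring)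
    have recB : P (-(i:ℤ)) = P (-(i:ℤ)-2) + P (-(i:ℤ)-3) :=
      hrecE P hrec (-(i:ℤ)-3) (-(i:ℤ)-2) (-(i:ℤ)) (by ring) (by ring)
    rw [b1, b2]
    rw [recB] at ih
    linear_combination ih

theorem padovan_rho_sigma (P : ℤ → ℤ) (h0 : P 0 = 1) (h1 : P 1 = 1) (h2 : P 2 = 1)
    (hrec : ∀ n : ℤ, P (n + 3) = P (n + 1) + P n) (a n : ℤ) :
    P n = (3 * P (a - 2) - P (a - 4)) * P (n - a)
      + (-(3 * P (-a - 2) - P (-a - 4))) * P (n - 2 * a) + P (n - 3 * a) := by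
  have hx3 : P (n-3*a+3) = P (n-3*a+1) + P (n-3*a) :=
    hrecE P hrec (n-3*a) (n-3*a+1) (n-3*a+3) (by ring) (by ring)
  have hx4 : P (n-3*a+4) = P (n-3*a+2) + P (n-3*a+1) :=
    hrecE P hrec (n-3*a+1) (n-3*a+2) (n-3*a+4) (by ring) (by ring)
  have hc3 : P (n-2*a+3) = P (n-2*a+1) + P (n-2*a) :=
    hrecE P hrec (n-2*a) (n-2*a+1) (n-2*a+3) (by ring) (by ring)
  have hc4 : P (n-2*a+4) = P (n-2*a+2) + P (n-2*a+1) :=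
    hrecE P hrec (n-2*a+1) (n-2*a+2) (n-2*a+4) (by ring) (by ring)
  have hA3 : P a = P (a-2) + P (a-3) := hrecE P hrec (a-3) (a-2) a (by ring) (by ring)
  have hA4 : P (a-1) = P (a-3) + P (a-4) := hrecE P hrec (a-4) (a-3) (a-1) (by ring) (by ring)
  have hB3 : P (-a) = P (-a-2) + P (-a-3) := hrecE P hrec (-a-3) (-a-2) (-a) (by ring) (by ring)
  have hB4 : P (-a-1) = P (-a-3) + P (-a-4) :=
    hrecE P hrec (-a-4) (-a-3) (-a-1) (by ring) (by ring)
  have hm1 : P (-a+1) = P (-a-1) + P (-a-2) :=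
    hrecE P hrec (-a-2) (-a-1) (-a+1) (by ring) (by ring)
  have hm2 : P (-a+2) = P (-a) + P (-a-1) := hrecE P hrec (-a-1) (-a) (-a+2) (by ring) (by ring)
  have hm3 : P (-a+3) = P (-a+1) + P (-a) := hrecE P hrec (-a) (-a+1) (-a+3) (by ring) (by ring)
  have hm4 : P (-a+4) = P (-a+2) + P (-a+1) :=
    hrecE P hrec (-a+1) (-a+2) (-a+4) (by ring) (by ring)
  have I1 := addlawE P h0 h1 h2 hrec a (n-3*a) (n-3*a+1) (n-3*a+2) (a-1) (a-2) (n-2*a)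
    (by ring) (by ring) (by ring) (by ring) (by ring)
  have I2 := addlawE P h0 h1 h2 hrec a (n-3*a+1) (n-3*a+2) (n-3*a+3) (a-1) (a-2) (n-2*a+1)
    (by ring) (by ring) (by ring) (by ring) (by ring)
  have I3 := addlawE P h0 h1 h2 hrec a (n-3*a+2) (n-3*a+3) (n-3*a+4) (a-1) (a-2) (n-2*a+2)
    (by ring) (by ring) (by ring) (by ring) (by ring)
  have I4 := addlawE P h0 h1 h2 hrec a (n-2*a) (n-2*a+1) (n-2*a+2) (a-1) (a-2) (n-a)
    (by ring) (by ring) (by ring) (by ring) (by ring)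
  have I5 := addlawE P h0 h1 h2 hrec a (n-2*a+1) (n-2*a+2) (n-2*a+3) (a-1) (a-2) (n-a+1)
    (by ring) (by ring) (by ring) (by ring) (by ring)
  have I6 := addlawE P h0 h1 h2 hrec a (n-2*a+2) (n-2*a+3) (n-2*a+4) (a-1) (a-2) (n-a+2)
    (by ring) (by ring) (by ring) (by ring) (by ring)
  have I7 := addlawE P h0 h1 h2 hrec a (n-a) (n-a+1) (n-a+2) (a-1) (a-2) n
    (by ring) (by ring) (by ring) (by ring) (by ring)
  have R0 := addlawE P h0 h1 h2 hrec a (-a) (-a+1) (-a+2) (a-1) (a-2) 0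
    (by ring) (by ring) (by ring) (by ring) (by ring)
  have R1 := addlawE P h0 h1 h2 hrec a (-a+1) (-a+2) (-a+3) (a-1) (a-2) 1
    (by ring) (by ring) (by ring) (by ring) (by ring)
  have R2 := addlawE P h0 h1 h2 hrec a (-a+2) (-a+3) (-a+4) (a-1) (a-2) 2
    (by ring) (by ring) (by ring) (by ring) (by ring)
  have hD := pdet P h0 h1 h2 hrec a
  linear_combination
      ((P (a-2))*(P (a-2))*(P (a-2))*(P (n-3*a+2)) - (P (a-2))*(P (a-2))*(P (a-2))*(P (n-3*a+1)) + (P (a-1))*(P (a-2))*(P (a-2))*(P (n-3*a+1)) - (P (a-1))*(P (a-2))*(P (a-2))*(P (n-3*a)) - 4*(P (a-1))*(P (a-1))*(P (a-2))*(P (n-3*a+2)) + 3*(P (a-1))*(P (a-1))*(P (a-2))*(P (n-3*a+1)) + (P (a-1))*(P (a-1))*(P (a-2))*(P (n-3*a)) - 3*(P (a-1))*(P (a-1))*(P (a-1))*(P (n-3*a+2)) + 3*(P (a-1))*(P (a-1))*(P (a-1))*(P (n-3*a)) + (P a)*(P (a-2))*(P (a-2))*(P (n-3*a)) + (P a)*(P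 (a-1))*(P (a-2))*(P (n-3*a+2)) - 2*(P a)*(P (a-1))*(P (a-2))*(P (n-3*a)) + 2*(P a)*(P (a-1))*(P (a-1))*(P (n-3*a+2)) - 3*(P a)*(P (a-1))*(P (a-1))*(P (n-3*a+1)) - 2*(P a)*(P (a-1))*(P (a-1))*(P (n-3*a)) + (P a)*(P a)*(P (a-2))*(P (n-3*a+2)) - (P a)*(P a)*(P (a-2))*(P (n-3*a+1)) + (P a)*(P a)*(P (a-2))*(P (n-3*a)) + 3*(P a)*(P a)*(P (a-1))*(P (n-3*a+2)) - (P a)*(P a)*(P (a-1))*(P (n-3*a+1)) - 3*(P a)*(P a)*(P (a-1))*(P (n-3*a)) - 2*(P a)*(P a)*(P a)*(P (n-3*a+2)) + 2*(P a)*(P a)*(P a)*(P (n-3*a+1)) + 2*(P a)*(P a)*(P a)*(P (n-3*a))) * h0 +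
      (3*(P (a-2))*(P (a-2))*(P (a-2))*(P (n-3*a+2)) - 3*(P (a-2))*(P (a-2))*(P (a-2))*(P (n-3*a+1)) + 7*(P (a-1))*(P (a-2))*(P (a-2))*(P (n-3*a+2)) - 4*(P (a-1))*(P (a-2))*(P (a-2))*(P (n-3*a+1)) - 3*(P (a-1))*(P (a-2))*(P (a-2))*(P (n-3*a)) + 5*(P (a-1))*(P (a-1))*(P (a-2))*(P (n-3*a+2)) - (P (a-1))*(P (a-1))*(P (a-2))*(P (n-3*a+1)) - 4*(P (a-1))*(P (a-1))*(P (a-2))*(P (n-3*a)) + (P (a-1))*(P (a-1))*(P (a-1))*(P (n-3*a+2)) - (P (a-1))*(P (a-1))*(P (a-1))*(P (n-3*a)) - 3*(P a)*(P (a-2))*(P (a-2))*(P (n-3*a+2)) + 3*(P a)*(P (a-2))*(P (a-2))*(P (n-3*a+1)) + 3*(P a)*(P (a-2))*(P (a-2))*(P (n-3*a)) - 7*(P a)*(P (a-1))*(P (a-2))*(P (n-3*a+2)) + 7*(P a)*(P (a-1))*(P (a-2))*(P (n-3*a+1)) + 4*(P a)*(P (a-1))*(P (a-2))*(P (n-3*a))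 - 4*(P a)*(P (a-1))*(P (a-1))*(P (n-3*a+2)) + (P a)*(P (a-1))*(P (a-1))*(P (n-3*a+1)) + 4*(P a)*(P (a-1))*(P (a-1))*(P (n-3*a)) - (P a)*(P a)*(P (a-2))*(P (n-3*a+2)) + (P a)*(P a)*(P (a-2))*(P (n-3*a+1)) + 2*(P a)*(P a)*(P (a-1))*(P (n-3*a+2)) - 3*(P a)*(P a)*(P (a-1))*(P (n-3*a+1)) - 2*(P a)*(P a)*(P (a-1))*(P (n-3*a)) + (P a)*(P a)*(P a)*(P (n-3*a+2)) - (P a)*(P a)*(P a)*(P (n-3*a+1)) - (P a)*(P a)*(P a)*(P (n-3*a))) * h1 +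
      (- (P (a-2))*(P (a-2))*(P (a-2))*(P (n-3*a+2)) + (P (a-2))*(P (a-2))*(P (a-2))*(P (n-3*a+1)) - 3*(P (a-1))*(P (a-2))*(P (a-2))*(P (n-3*a+2)) + 2*(P (a-1))*(P (a-2))*(P (a-2))*(P (n-3*a+1)) + (P (a-1))*(P (a-2))*(P (a-2))*(P (n-3*a)) - 2*(P (a-1))*(P (a-1))*(P (a-2))*(P (n-3*a+1)) + 2*(P (a-1))*(P (a-1))*(P (a-2))*(P (n-3*a)) + 2*(P (a-1))*(P (a-1))*(P (a-1))*(P (n-3*a+2)) - 2*(P (a-1))*(P (a-1))*(P (a-1))*(P (n-3*a)) - 2*(P a)*(P (a-2))*(P (a-2))*(P (n-3*a+2)) + 2*(P a)*(P (a-2))*(P (a-2))*(P (n-3*a+1)) - (P a)*(P (a-2))*(P (a-2))*(P (n-3*a)) - 3*(P a)*(P (a-1))*(P (a-2))*(P (n-3*a+1)) + (P a)*(P (a-1))*(P (a-2))*(P (n-3*a)) - (P a)*(P (a-1))*(P (a-1))*(P (n-3*a+2)) + 2*(P a)*(P (a-1))*(P (a-1))*(P (n-3*a+1)) + (P a)*(P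 (a-1))*(P (a-1))*(P (n-3*a)) + 4*(P a)*(P a)*(P (a-2))*(P (n-3*a+2)) - 4*(P a)*(P a)*(P (a-2))*(P (n-3*a+1)) - 3*(P a)*(P a)*(P (a-2))*(P (n-3*a)) + (P a)*(P a)*(P (a-1))*(P (n-3*a+1)) - (P a)*(P a)*(P a)*(P (n-3*a+2)) + (P a)*(P a)*(P a)*(P (n-3*a+1)) + (P a)*(P a)*(P a)*(P (n-3*a))) * h2 +
      (- 2*(P (a-2))*(P (a-2))*(P (a-4)) + 3*(P (a-2))*(P (a-2))*(P (a-2)) - 2*(P (a-1))*(P (a-2))*(P (a-4)) + 7*(P (a-1))*(P (a-2))*(P (a-2)) + 4*(P (a-1))*(P (a-1))*(P (a-2)) + (P (a-1))*(P (a-1))*(P (a-1)) + 4*(P a)*(P (a-2))*(P (a-4)) - 7*(P a)*(P (a-2))*(P (a-2)) + 2*(P a)*(P (a-1))*(P (a-4)) - 12*(P a)*(P (a-1))*(P (a-2)) - 4*(P a)*(P (a-1))*(P (a-1)) - 2*(P a)*(P a)*(P (a-4)) + 5*(P a)*(P a)*(P (a-2)) + 5*(P a)*(P a)*(P (a-1))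 - (P a)*(P a)*(P a)) * hx3 +
      ((P (a-2))*(P (a-2))*(P (a-4)) - (P (a-2))*(P (a-2))*(P (a-2)) + 2*(P (a-1))*(P (a-2))*(P (a-4)) - 4*(P (a-1))*(P (a-2))*(P (a-2)) + (P (a-1))*(P (a-1))*(P (a-4)) - 4*(P (a-1))*(P (a-1))*(P (a-2)) - (P (a-1))*(P (a-1))*(P (a-1)) - 2*(P a)*(P (a-2))*(P (a-4)) + 2*(P a)*(P (a-2))*(P (a-2)) - 2*(P a)*(P (a-1))*(P (a-4)) + 6*(P a)*(P (a-1))*(P (a-2)) + 3*(P a)*(P (a-1))*(P (a-1)) + (P a)*(P a)*(P (a-4)) - (P a)*(P a)*(P (a-2)) - 2*(P a)*(P a)*(P (a-1))) * hx4 +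
      (- 2*(P (a-2))*(P (a-2)) - 2*(P (a-1))*(P (a-2)) + 4*(P a)*(P (a-2)) + 2*(P a)*(P (a-1)) - 2*(P a)*(P a)) * hc3 +
      ((P (a-2))*(P (a-2)) + 2*(P (a-1))*(P (a-2)) + (P (a-1))*(P (a-1)) - 2*(P a)*(P (a-2)) - 2*(P a)*(P (a-1)) + (P a)*(P a)) * hc4 +
      (2*(P (a-2))*(P (a-2))*(P (n-3*a+2)) - (P (a-2))*(P (a-2))*(P (n-3*a+1)) - 2*(P (a-2))*(P (a-2))*(P (n-3*a)) + 2*(P (a-1))*(P (a-2))*(P (n-3*a+1)) - 2*(P (a-1))*(P (a-2))*(P (n-3*a)) - (P (a-1))*(P (a-1))*(P (n-3*a+2)) + (P (a-1))*(P (a-1))*(P (n-3*a+1)) + (P (a-1))*(P (a-1))*(P (n-3*a)) - 2*(P a)*(P (a-2))*(P (n-3*a+2)) + 4*(P a)*(P (a-2))*(P (n-3*a)) + 2*(P a)*(P (a-1))*(P (n-3*a+2)) - 2*(P a)*(P (a-1))*(P (n-3*a+1)) + (P a)*(P a)*(P (n-3*a+1)) - (P a)*(P a)*(P (n-3*a)))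 * hA3 +
      (- 2*(P (a-2))*(P (a-2))*(P (n-3*a+2)) + (P (a-2))*(P (a-2))*(P (n-3*a+1)) + 2*(P (a-2))*(P (a-2))*(P (n-3*a)) - 2*(P (a-1))*(P (a-2))*(P (n-3*a+1)) + 2*(P (a-1))*(P (a-2))*(P (n-3*a)) + (P (a-1))*(P (a-1))*(P (n-3*a+2)) - (P (a-1))*(P (a-1))*(P (n-3*a+1)) - (P (a-1))*(P (a-1))*(P (n-3*a)) + 2*(P a)*(P (a-2))*(P (n-3*a+2)) - 4*(P a)*(P (a-2))*(P (n-3*a)) - 2*(P a)*(P (a-1))*(P (n-3*a+2)) + 2*(P a)*(P (a-1))*(P (n-3*a+1)) - (P a)*(P a)*(P (n-3*a+1)) + (P a)*(P a)*(P (n-3*a))) * hA4 +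
      (- (P (a-2))*(P (n-3*a+2)) + (P (a-2))*(P (n-3*a+1)) - (P (a-1))*(P (n-3*a+2)) + (P (a-1))*(P (n-3*a)) + (P a)*(P (n-3*a+2)) - (P a)*(P (n-3*a+1)) - (P a)*(P (n-3*a))) * hB3 +
      ((P (a-2))*(P (n-3*a+2)) - (P (a-2))*(P (n-3*a+1)) + (P (a-1))*(P (n-3*a+2)) - (P (a-1))*(P (n-3*a)) - (P a)*(P (n-3*a+2)) + (P a)*(P (n-3*a+1)) + (P a)*(P (n-3*a))) * hB4 +
      (- 2*(P (a-2))*(P (a-2))*(P (a-2))*(P (a-2))*(P (n-3*a+2)) + 2*(P (a-2))*(P (a-2))*(P (a-2))*(P (a-2))*(P (n-3*a+1)) - 6*(P (a-1))*(P (a-2))*(P (a-2))*(P (a-2))*(P (n-3*a+2)) + 4*(P (a-1))*(P (a-2))*(P (a-2))*(P (a-2))*(P (n-3*a+1)) + 2*(P (a-1))*(P (a-2))*(P (a-2))*(P (a-2))*(P (n-3*a)) - 6*(P (a-1))*(P (a-1))*(P (a-2))*(P (a-2))*(P (n-3*a+2)) + 2*(P (a-1))*(P (a-1))*(P (a-2))*(P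 (a-2))*(P (n-3*a+1)) + 4*(P (a-1))*(P (a-1))*(P (a-2))*(P (a-2))*(P (n-3*a)) - 4*(P (a-1))*(P (a-1))*(P (a-1))*(P (a-2))*(P (n-3*a+2)) + 2*(P (a-1))*(P (a-1))*(P (a-1))*(P (a-2))*(P (n-3*a+1)) + 2*(P (a-1))*(P (a-1))*(P (a-1))*(P (a-2))*(P (n-3*a)) - 2*(P (a-1))*(P (a-1))*(P (a-1))*(P (a-1))*(P (n-3*a+2)) + 2*(P (a-1))*(P (a-1))*(P (a-1))*(P (a-1))*(P (n-3*a)) + 2*(P a)*(P (a-2))*(P (a-2))*(P (a-2))*(P (n-3*a+2)) - 2*(P a)*(P (a-2))*(P (a-2))*(P (a-2))*(P (n-3*a+1)) - 2*(P a)*(P (a-2))*(P (a-2))*(P (a-2))*(P (n-3*a)) + 10*(P a)*(P (a-1))*(P (a-2))*(P (a-2))*(P (n-3*a+2)) - 10*(P a)*(P (a-1))*(P (a-2))*(P (a-2))*(P (n-3*a+1)) - 4*(P a)*(P (a-1))*(P (a-2))*(P (a-2))*(P (n-3*a)) + 10*(P a)*(P (a-1))*(P (a-1))*(P (a-2))*(P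 (n-3*a+2)) - 4*(P a)*(P (a-1))*(P (a-1))*(P (a-2))*(P (n-3*a+1)) - 8*(P a)*(P (a-1))*(P (a-1))*(P (a-2))*(P (n-3*a)) + 4*(P a)*(P (a-1))*(P (a-1))*(P (a-1))*(P (n-3*a+2)) - 2*(P a)*(P (a-1))*(P (a-1))*(P (a-1))*(P (n-3*a+1)) - 4*(P a)*(P (a-1))*(P (a-1))*(P (a-1))*(P (n-3*a)) + 2*(P a)*(P a)*(P (a-2))*(P (a-2))*(P (n-3*a+2)) - 2*(P a)*(P a)*(P (a-2))*(P (a-2))*(P (n-3*a+1)) - 4*(P a)*(P a)*(P (a-1))*(P (a-2))*(P (n-3*a+2)) + 6*(P a)*(P a)*(P (a-1))*(P (a-2))*(P (n-3*a+1)) + 4*(P a)*(P a)*(P (a-1))*(P (a-2))*(P (n-3*a)) - 2*(P a)*(P a)*(P (a-1))*(P (a-1))*(P (n-3*a+2)) + 2*(P a)*(P a)*(P (a-1))*(P (a-1))*(P (n-3*a+1)) + 2*(P a)*(P a)*(P (a-1))*(P (a-1))*(P (n-3*a)) - 4*(P a)*(P a)*(P a)*(P (a-2))*(P (n-3*a+2))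 + 4*(P a)*(P a)*(P a)*(P (a-2))*(P (n-3*a+1)) + 2*(P a)*(P a)*(P a)*(P (a-2))*(P (n-3*a)) - 2*(P a)*(P a)*(P a)*(P (a-1))*(P (n-3*a+2)) + 2*(P a)*(P a)*(P a)*(P (a-1))*(P (n-3*a)) + 2*(P a)*(P a)*(P a)*(P a)*(P (n-3*a+2)) - 2*(P a)*(P a)*(P a)*(P a)*(P (n-3*a+1)) - 2*(P a)*(P a)*(P a)*(P a)*(P (n-3*a))) * hm1 +
      (3*(P (a-2))*(P (a-2))*(P (a-2))*(P (a-2))*(P (n-3*a+2)) - 3*(P (a-2))*(P (a-2))*(P (a-2))*(P (a-2))*(P (n-3*a+1)) + 9*(P (a-1))*(P (a-2))*(P (a-2))*(P (a-2))*(P (n-3*a+2)) - 6*(P (a-1))*(P (a-2))*(P (a-2))*(P (a-2))*(P (n-3*a+1)) - 3*(P (a-1))*(P (a-2))*(P (a-2))*(P (a-2))*(P (n-3*a)) + 9*(P (a-1))*(P (a-1))*(P (a-2))*(P (a-2))*(P (n-3*a+2)) - 3*(P (a-1))*(P (a-1))*(P (a-2))*(P (a-2))*(P (n-3*a+1)) -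 6*(P (a-1))*(P (a-1))*(P (a-2))*(P (a-2))*(P (n-3*a)) + 6*(P (a-1))*(P (a-1))*(P (a-1))*(P (a-2))*(P (n-3*a+2)) - 3*(P (a-1))*(P (a-1))*(P (a-1))*(P (a-2))*(P (n-3*a+1)) - 3*(P (a-1))*(P (a-1))*(P (a-1))*(P (a-2))*(P (n-3*a)) + 3*(P (a-1))*(P (a-1))*(P (a-1))*(P (a-1))*(P (n-3*a+2)) - 3*(P (a-1))*(P (a-1))*(P (a-1))*(P (a-1))*(P (n-3*a)) - 3*(P a)*(P (a-2))*(P (a-2))*(P (a-2))*(P (n-3*a+2)) + 3*(P a)*(P (a-2))*(P (a-2))*(P (a-2))*(P (n-3*a+1)) + 3*(P a)*(P (a-2))*(P (a-2))*(P (a-2))*(P (n-3*a)) - 15*(P a)*(P (a-1))*(P (a-2))*(P (a-2))*(P (n-3*a+2)) + 15*(P a)*(P (a-1))*(P (a-2))*(P (a-2))*(P (n-3*a+1)) + 6*(P a)*(P (a-1))*(P (a-2))*(P (a-2))*(P (n-3*a)) - 15*(P a)*(P (a-1))*(P (a-1))*(P (a-2))*(P (n-3*a+2)) + 6*(P a)*(P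 (a-1))*(P (a-1))*(P (a-2))*(P (n-3*a+1)) + 12*(P a)*(P (a-1))*(P (a-1))*(P (a-2))*(P (n-3*a)) - 6*(P a)*(P (a-1))*(P (a-1))*(P (a-1))*(P (n-3*a+2)) + 3*(P a)*(P (a-1))*(P (a-1))*(P (a-1))*(P (n-3*a+1)) + 6*(P a)*(P (a-1))*(P (a-1))*(P (a-1))*(P (n-3*a)) - 3*(P a)*(P a)*(P (a-2))*(P (a-2))*(P (n-3*a+2)) + 3*(P a)*(P a)*(P (a-2))*(P (a-2))*(P (n-3*a+1)) + 6*(P a)*(P a)*(P (a-1))*(P (a-2))*(P (n-3*a+2)) - 9*(P a)*(P a)*(P (a-1))*(P (a-2))*(P (n-3*a+1)) - 6*(P a)*(P a)*(P (a-1))*(P (a-2))*(P (n-3*a)) + 3*(P a)*(P a)*(P (a-1))*(P (a-1))*(P (n-3*a+2)) - 3*(P a)*(P a)*(P (a-1))*(P (a-1))*(P (n-3*a+1)) - 3*(P a)*(P a)*(P (a-1))*(P (a-1))*(P (n-3*a)) + 6*(P a)*(P a)*(P a)*(P (a-2))*(P (n-3*a+2)) - 6*(P a)*(P a)*(P a)*(P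 (a-2))*(P (n-3*a+1)) - 3*(P a)*(P a)*(P a)*(P (a-2))*(P (n-3*a)) + 3*(P a)*(P a)*(P a)*(P (a-1))*(P (n-3*a+2)) - 3*(P a)*(P a)*(P a)*(P (a-1))*(P (n-3*a)) - 3*(P a)*(P a)*(P a)*(P a)*(P (n-3*a+2)) + 3*(P a)*(P a)*(P a)*(P a)*(P (n-3*a+1)) + 3*(P a)*(P a)*(P a)*(P a)*(P (n-3*a))) * hm2 +
      (- 4*(P (a-2))*(P (a-2))*(P (a-2))*(P (a-2))*(P (n-3*a+2)) + 4*(P (a-2))*(P (a-2))*(P (a-2))*(P (a-2))*(P (n-3*a+1)) - 13*(P (a-1))*(P (a-2))*(P (a-2))*(P (a-2))*(P (n-3*a+2)) + 9*(P (a-1))*(P (a-2))*(P (a-2))*(P (a-2))*(P (n-3*a+1)) + 4*(P (a-1))*(P (a-2))*(P (a-2))*(P (a-2))*(P (n-3*a)) - 12*(P (a-1))*(P (a-1))*(P (a-2))*(P (a-2))*(P (n-3*a+2)) + 3*(P (a-1))*(P (a-1))*(P (a-2))*(P (a-2))*(P (n-3*a+1)) + 9*(P (a-1))*(P (a-1))*(P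 (a-2))*(P (a-2))*(P (n-3*a)) - 4*(P (a-1))*(P (a-1))*(P (a-1))*(P (a-2))*(P (n-3*a+2)) + (P (a-1))*(P (a-1))*(P (a-1))*(P (a-2))*(P (n-3*a+1)) + 3*(P (a-1))*(P (a-1))*(P (a-1))*(P (a-2))*(P (n-3*a)) - (P (a-1))*(P (a-1))*(P (a-1))*(P (a-1))*(P (n-3*a+2)) + (P (a-1))*(P (a-1))*(P (a-1))*(P (a-1))*(P (n-3*a)) + 5*(P a)*(P (a-2))*(P (a-2))*(P (a-2))*(P (n-3*a+2)) - 5*(P a)*(P (a-2))*(P (a-2))*(P (a-2))*(P (n-3*a+1)) - 4*(P a)*(P (a-2))*(P (a-2))*(P (a-2))*(P (n-3*a)) + 20*(P a)*(P (a-1))*(P (a-2))*(P (a-2))*(P (n-3*a+2)) - 19*(P a)*(P (a-1))*(P (a-2))*(P (a-2))*(P (n-3*a+1)) - 10*(P a)*(P (a-1))*(P (a-2))*(P (a-2))*(P (n-3*a)) + 15*(P a)*(P (a-1))*(P (a-1))*(P (a-2))*(P (n-3*a+2)) - 5*(P a)*(P (a-1))*(P (a-1))*(P (a-2))*(P (n-3*a+1))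 - 13*(P a)*(P (a-1))*(P (a-1))*(P (a-2))*(P (n-3*a)) + 3*(P a)*(P (a-1))*(P (a-1))*(P (a-1))*(P (n-3*a+2)) - (P a)*(P (a-1))*(P (a-1))*(P (a-1))*(P (n-3*a+1)) - 3*(P a)*(P (a-1))*(P (a-1))*(P (a-1))*(P (n-3*a)) + 4*(P a)*(P a)*(P (a-2))*(P (a-2))*(P (n-3*a+2)) - 4*(P a)*(P a)*(P (a-2))*(P (a-2))*(P (n-3*a+1)) + (P a)*(P a)*(P (a-2))*(P (a-2))*(P (n-3*a)) - 8*(P a)*(P a)*(P (a-1))*(P (a-2))*(P (n-3*a+2)) + 13*(P a)*(P a)*(P (a-1))*(P (a-2))*(P (n-3*a+1)) + 5*(P a)*(P a)*(P (a-1))*(P (a-2))*(P (n-3*a)) - 5*(P a)*(P a)*(P (a-1))*(P (a-1))*(P (n-3*a+2)) + 2*(P a)*(P a)*(P (a-1))*(P (a-1))*(P (n-3*a+1)) + 5*(P a)*(P a)*(P (a-1))*(P (a-1))*(P (n-3*a)) - 7*(P a)*(P a)*(P a)*(P (a-2))*(P (n-3*a+2)) + 7*(P a)*(P a)*(P a)*(P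 (a-2))*(P (n-3*a+1)) + 5*(P a)*(P a)*(P a)*(P (a-2))*(P (n-3*a)) + (P a)*(P a)*(P a)*(P (a-1))*(P (n-3*a+2)) - 3*(P a)*(P a)*(P a)*(P (a-1))*(P (n-3*a+1)) - (P a)*(P a)*(P a)*(P (a-1))*(P (n-3*a)) + 2*(P a)*(P a)*(P a)*(P a)*(P (n-3*a+2)) - 2*(P a)*(P a)*(P a)*(P a)*(P (n-3*a+1)) - 2*(P a)*(P a)*(P a)*(P a)*(P (n-3*a))) * hm3 +
      ((P (a-2))*(P (a-2))*(P (a-2))*(P (a-2))*(P (n-3*a+2)) - (P (a-2))*(P (a-2))*(P (a-2))*(P (a-2))*(P (n-3*a+1)) + 4*(P (a-1))*(P (a-2))*(P (a-2))*(P (a-2))*(P (n-3*a+2)) - 3*(P (a-1))*(P (a-2))*(P (a-2))*(P (a-2))*(P (n-3*a+1)) - (P (a-1))*(P (a-2))*(P (a-2))*(P (a-2))*(P (n-3*a)) + 3*(P (a-1))*(P (a-1))*(P (a-2))*(P (a-2))*(P (n-3*a+2)) - 3*(P (a-1))*(P (a-1))*(P (a-2))*(P (a-2))*(P (n-3*a))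 - 2*(P (a-1))*(P (a-1))*(P (a-1))*(P (a-2))*(P (n-3*a+2)) + 2*(P (a-1))*(P (a-1))*(P (a-1))*(P (a-2))*(P (n-3*a+1)) - 2*(P (a-1))*(P (a-1))*(P (a-1))*(P (a-1))*(P (n-3*a+2)) + 2*(P (a-1))*(P (a-1))*(P (a-1))*(P (a-1))*(P (n-3*a)) + (P a)*(P (a-2))*(P (a-2))*(P (a-2))*(P (n-3*a+2)) - (P a)*(P (a-2))*(P (a-2))*(P (a-2))*(P (n-3*a+1)) + (P a)*(P (a-2))*(P (a-2))*(P (a-2))*(P (n-3*a)) - (P a)*(P (a-1))*(P (a-2))*(P (a-2))*(P (n-3*a+2)) + 3*(P a)*(P (a-1))*(P (a-2))*(P (a-2))*(P (n-3*a+1)) + (P a)*(P (a-1))*(P (a-2))*(P (a-2))*(P (n-3*a)) + (P a)*(P (a-1))*(P (a-1))*(P (a-2))*(P (n-3*a+2)) - (P a)*(P (a-1))*(P (a-1))*(P (a-2))*(P (n-3*a+1)) + 3*(P a)*(P (a-1))*(P (a-1))*(P (a-1))*(P (n-3*a+2)) - 2*(P a)*(P (a-1))*(P (a-1))*(P (a-1))*(P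 (n-3*a+1)) - 3*(P a)*(P (a-1))*(P (a-1))*(P (a-1))*(P (n-3*a)) - 6*(P a)*(P a)*(P (a-2))*(P (a-2))*(P (n-3*a+2)) + 6*(P a)*(P a)*(P (a-2))*(P (a-2))*(P (n-3*a+1)) + 2*(P a)*(P a)*(P (a-2))*(P (a-2))*(P (n-3*a)) - 4*(P a)*(P a)*(P (a-1))*(P (a-2))*(P (n-3*a+2)) + 4*(P a)*(P a)*(P (a-1))*(P (a-2))*(P (n-3*a)) - (P a)*(P a)*(P (a-1))*(P (a-1))*(P (n-3*a+2)) + (P a)*(P a)*(P (a-1))*(P (a-1))*(P (n-3*a+1)) + (P a)*(P a)*(P (a-1))*(P (a-1))*(P (n-3*a)) + 5*(P a)*(P a)*(P a)*(P (a-2))*(P (n-3*a+2)) - 5*(P a)*(P a)*(P a)*(P (a-2))*(P (n-3*a+1)) - 4*(P a)*(P a)*(P a)*(P (a-2))*(P (n-3*a)) + (P a)*(P a)*(P a)*(P (a-1))*(P (n-3*a+2)) - (P a)*(P a)*(P a)*(P (a-1))*(P (n-3*a)) - (P a)*(P a)*(P a)*(P a)*(P (n-3*a+2)) + (P a)*(P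 a)*(P a)*(P a)*(P (n-3*a+1)) + (P a)*(P a)*(P a)*(P a)*(P (n-3*a))) * hm4 +
      (- (P (-a-4)) + 3*(P (-a-2)) - 2*(P (a-2))*(P (a-2)) - (P (a-1))*(P (a-4)) + (P (a-1))*(P (a-2)) + (P (a-1))*(P (a-1)) + (P a)*(P (a-4)) + (P a)*(P (a-2)) - (P a)*(P a)) * I1 +
      (- (P (a-2))*(P (a-4)) + 2*(P (a-2))*(P (a-2)) + 2*(P (a-1))*(P (a-2)) + (P (a-1))*(P (a-1)) + (P a)*(P (a-4)) - 3*(P a)*(P (a-2)) - 2*(P a)*(P (a-1)) + (P a)*(P a)) * I2 +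
      ((P (a-2))*(P (a-4)) - (P (a-2))*(P (a-2)) + (P (a-1))*(P (a-4)) - 3*(P (a-1))*(P (a-2)) - (P (a-1))*(P (a-1)) - (P a)*(P (a-4)) + (P a)*(P (a-2)) + 2*(P a)*(P (a-1))) * I3 +
      ((P (a-4)) - 3*(P (a-2)) - (P (a-1)) + (P a)) * I4 +
      (- (P (a-2)) + (P a)) * I5 +
      ((P (a-2)) + (P (a-1)) - (P a)) * I6 +
      (1) * I7 +
      (- (P (a-2))*(P (a-2))*(P (a-2))*(P (n-3*a+2)) + (P (a-2))*(P (a-2))*(P (a-2))*(P (n-3*a+1)) - (P (a-1))*(P (a-2))*(P (a-2))*(P (n-3*a+1)) + (P (a-1))*(P (a-2))*(P (a-2))*(P (n-3*a)) + 4*(P (a-1))*(P (a-1))*(P (a-2))*(P (n-3*a+2)) - 3*(P (a-1))*(P (a-1))*(P (a-2))*(P (n-3*a+1)) - (P (a-1))*(P (a-1))*(P (a-2))*(P (n-3*a)) + 3*(P (a-1))*(P (a-1))*(P (a-1))*(P (n-3*a+2)) - 3*(P (a-1))*(P (a-1))*(P (a-1))*(P (n-3*a)) - (P a)*(P (a-2))*(P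 (a-2))*(P (n-3*a)) - (P a)*(P (a-1))*(P (a-2))*(P (n-3*a+2)) + 2*(P a)*(P (a-1))*(P (a-2))*(P (n-3*a)) - 2*(P a)*(P (a-1))*(P (a-1))*(P (n-3*a+2)) + 3*(P a)*(P (a-1))*(P (a-1))*(P (n-3*a+1)) + 2*(P a)*(P (a-1))*(P (a-1))*(P (n-3*a)) - (P a)*(P a)*(P (a-2))*(P (n-3*a+2)) + (P a)*(P a)*(P (a-2))*(P (n-3*a+1)) - (P a)*(P a)*(P (a-2))*(P (n-3*a)) - 3*(P a)*(P a)*(P (a-1))*(P (n-3*a+2)) + (P a)*(P a)*(P (a-1))*(P (n-3*a+1)) + 3*(P a)*(P a)*(P (a-1))*(P (n-3*a)) + 2*(P a)*(P a)*(P a)*(P (n-3*a+2)) - 2*(P a)*(P a)*(P a)*(P (n-3*a+1)) - 2*(P a)*(P a)*(P a)*(P (n-3*a))) * R0 +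
      (- 3*(P (a-2))*(P (a-2))*(P (a-2))*(P (n-3*a+2)) + 3*(P (a-2))*(P (a-2))*(P (a-2))*(P (n-3*a+1)) - 7*(P (a-1))*(P (a-2))*(P (a-2))*(P (n-3*a+2)) + 4*(P (a-1))*(P (a-2))*(P (a-2))*(P (n-3*a+1)) + 3*(P (a-1))*(P (a-2))*(P (a-2))*(P (n-3*a)) - 5*(P (a-1))*(P (a-1))*(P (a-2))*(P (n-3*a+2)) + (P (a-1))*(P (a-1))*(P (a-2))*(P (n-3*a+1)) + 4*(P (a-1))*(P (a-1))*(P (a-2))*(P (n-3*a)) - (P (a-1))*(P (a-1))*(P (a-1))*(P (n-3*a+2)) + (P (a-1))*(P (a-1))*(P (a-1))*(P (n-3*a)) + 3*(P a)*(P (a-2))*(P (a-2))*(P (n-3*a+2)) - 3*(P a)*(P (a-2))*(P (a-2))*(P (n-3*a+1)) - 3*(P a)*(P (a-2))*(P (a-2))*(P (n-3*a)) + 7*(P a)*(P (a-1))*(P (a-2))*(P (n-3*a+2)) - 7*(P a)*(P (a-1))*(P (a-2))*(P (n-3*a+1)) - 4*(P a)*(P (a-1))*(P (a-2))*(P (n-3*a))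 + 4*(P a)*(P (a-1))*(P (a-1))*(P (n-3*a+2)) - (P a)*(P (a-1))*(P (a-1))*(P (n-3*a+1)) - 4*(P a)*(P (a-1))*(P (a-1))*(P (n-3*a)) + (P a)*(P a)*(P (a-2))*(P (n-3*a+2)) - (P a)*(P a)*(P (a-2))*(P (n-3*a+1)) - 2*(P a)*(P a)*(P (a-1))*(P (n-3*a+2)) + 3*(P a)*(P a)*(P (a-1))*(P (n-3*a+1)) + 2*(P a)*(P a)*(P (a-1))*(P (n-3*a)) - (P a)*(P a)*(P a)*(P (n-3*a+2)) + (P a)*(P a)*(P a)*(P (n-3*a+1)) + (P a)*(P a)*(P a)*(P (n-3*a))) * R1 +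
      ((P (a-2))*(P (a-2))*(P (a-2))*(P (n-3*a+2)) - (P (a-2))*(P (a-2))*(P (a-2))*(P (n-3*a+1)) + 3*(P (a-1))*(P (a-2))*(P (a-2))*(P (n-3*a+2)) - 2*(P (a-1))*(P (a-2))*(P (a-2))*(P (n-3*a+1)) - (P (a-1))*(P (a-2))*(P (a-2))*(P (n-3*a)) + 2*(P (a-1))*(P (a-1))*(P (a-2))*(P (n-3*a+1)) - 2*(P (a-1))*(P (a-1))*(P (a-2))*(P (n-3*a)) - 2*(P (a-1))*(P (a-1))*(P (a-1))*(P (n-3*a+2)) + 2*(P (a-1))*(P (a-1))*(P (a-1))*(P (n-3*a)) + 2*(P a)*(P (a-2))*(P (a-2))*(P (n-3*a+2)) - 2*(P a)*(P (a-2))*(P (a-2))*(P (n-3*a+1)) + (P a)*(P (a-2))*(P (a-2))*(P (n-3*a)) + 3*(P a)*(P (a-1))*(P (a-2))*(P (n-3*a+1)) - (P a)*(P (a-1))*(P (a-2))*(P (n-3*a)) + (P a)*(P (a-1))*(P (a-1))*(P (n-3*a+2)) - 2*(P a)*(P (a-1))*(P (a-1))*(P (n-3*a+1)) - (P a)*(P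 (a-1))*(P (a-1))*(P (n-3*a)) - 4*(P a)*(P a)*(P (a-2))*(P (n-3*a+2)) + 4*(P a)*(P a)*(P (a-2))*(P (n-3*a+1)) + 3*(P a)*(P a)*(P (a-2))*(P (n-3*a)) - (P a)*(P a)*(P (a-1))*(P (n-3*a+1)) + (P a)*(P a)*(P a)*(P (n-3*a+2)) - (P a)*(P a)*(P a)*(P (n-3*a+1)) - (P a)*(P a)*(P a)*(P (n-3*a))) * R2 +
      ((P (n-3*a)) - 2*(P (a-2))*(P (-a-2))*(P (n-3*a+2)) + 2*(P (a-2))*(P (-a-2))*(P (n-3*a+1)) + (P (a-2))*(P (-a-1))*(P (n-3*a+2)) - (P (a-2))*(P (-a-1))*(P (n-3*a+1)) - (P (a-2))*(P (-a))*(P (n-3*a+2)) + (P (a-2))*(P (-a))*(P (n-3*a+1)) - 2*(P (a-1))*(P (-a-2))*(P (n-3*a+2)) + 2*(P (a-1))*(P (-a-2))*(P (n-3*a)) + (P (a-1))*(P (-a-1))*(P (n-3*a+2)) - (P (a-1))*(P (-a-1))*(P (n-3*a)) - (P (a-1))*(P (-a))*(P (n-3*a+2)) + (P (a-1))*(P (-a))*(P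 (n-3*a)) + 2*(P a)*(P (-a-2))*(P (n-3*a+2)) - 2*(P a)*(P (-a-2))*(P (n-3*a+1)) - 2*(P a)*(P (-a-2))*(P (n-3*a)) - (P a)*(P (-a-1))*(P (n-3*a+2)) + (P a)*(P (-a-1))*(P (n-3*a+1)) + (P a)*(P (-a-1))*(P (n-3*a)) + (P a)*(P (-a))*(P (n-3*a+2)) - (P a)*(P (-a))*(P (n-3*a+1)) - (P a)*(P (-a))*(P (n-3*a))) * hD
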